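/- Let q_n be the semi-regular denominators and F_n the Fibonacci numbers (F_0=0, F_1=1). Then q_n ≤ F_{n+1} · b_1 b_2 ⋯ b_n for all n ≥ 0. -/

import Mathlib

theorem srcf_denominator_upper_bound (a b q : ℤ → ℤ)
    (ha : ∀ n : ℤ, 1 ≤ n → a n = 1 ∨ a n = -1)
    (hb : ∀ n : ℤ, 1 ≤ n → 1 ≤ b n)
    (hba : ∀ n : ℤ, 1 ≤ n → 1 ≤ b n + a (n + 1))
    (hqm1 : q (-1) = 0) (hq0 : q 0 = 1)
    (hq : ∀ n : ℤ, 1 ≤ n → q n = b n * q (n - 1) + a n * q (n - 2)) :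
    ∀ n : ℤ, 0 ≤ n →
      q n ≤ (Nat.fib (n + 1).toNat : ℤ) * ∏ k ∈ Finset.Icc (1 : ℤ) n, b k := by
  -- positivity of the denominators
  have pos : ∀ m : ℕ, 1 ≤ q m ∧ 0 ≤ q ((m : ℤ) - 1) ∧
      1 ≤ q m + a ((m : ℤ) + 1) * q ((m : ℤ) - 1) := by
    intro m
    induction m with
    | zero => norm_num [hq0, hqm1]
    | succ m ih =>
      obtain ⟨h1, h2, h3⟩ := ih
      have hm1 : (1 : ℤ) ≤ (m : ℤ) + 1 := by omega
      have hrec := hq ((m : ℤ) + 1) hm1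
      have e1 : ((m : ℤ) + 1 - 1) = (m : ℤ) := by ring
      have e2 : ((m : ℤ) + 1 - 2) = (m : ℤ) - 1 := by ring
      rw [e1, e2] at hrec
      have hb' := hb _ hm1
      have hba' := hba _ hm1
      have hcast : ((m + 1 : ℕ) : ℤ) = (m : ℤ) + 1 := by push_cast; ring
      have ecast2 : ((m + 1 : ℕ) : ℤ) - 1 = (m : ℤ) := by push_cast; ring
      have key1 : (0 : ℤ) ≤ (b ((m : ℤ) + 1) - 1) * q m :=
        mul_nonneg (by linarith) (by linarith)
      have key2 : (0 : ℤ) ≤ (b ((m : ℤ) + 1) + a ((m : ℤ) + 1 + 1) - 1) * q m :=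
        mul_nonneg (by linarith) (by linarith)
      refine ⟨?_, ?_, ?_⟩
      · rw [hcast, hrec]; nlinarith
      · rw [ecast2]; linarith
      · rw [hcast, e1, hrec]; nlinarith
  have qnonneg : ∀ m : ℕ, 0 ≤ q m := fun m => le_trans zero_le_one (pos m).1
  -- product facts
  have prodpos : ∀ n : ℤ, (1 : ℤ) ≤ ∏ k ∈ Finset.Icc (1 : ℤ) n, b k := by
    intro n
    calc (1 : ℤ) = ∏ _k ∈ Finset.Icc (1 : ℤ) n, (1 : ℤ) := by simp
      _ ≤ ∏ k ∈ Finset.Icc (1 : ℤ) n, b k :=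
        Finset.prod_le_prod (by simp) fun i hi => hb i (Finset.mem_Icc.mp hi).1
  have prodsucc : ∀ n : ℤ, 0 ≤ n →
      ∏ k ∈ Finset.Icc (1 : ℤ) (n + 1), b k
        = (∏ k ∈ Finset.Icc (1 : ℤ) n, b k) * b (n + 1) := by
    intro n hn
    have : Finset.Icc (1 : ℤ) (n + 1) = insert (n + 1) (Finset.Icc 1 n) := by
      ext x; simp; omega
    rw [this, Finset.prod_insert (by simp), mul_comm]
  have prodmono1 : ∀ n : ℤ, 0 ≤ n →
      (∏ k ∈ Finset.Icc (1 : ℤ) n, b k) ≤ ∏ k ∈ Finset.Icc (1 : ℤ) (n + 1), b k := by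
    intro n hn
    rw [prodsucc n hn]
    have b1 := hb (n + 1) (by omega)
    nlinarith [prodpos n, mul_nonneg (by linarith [prodpos n] : (0:ℤ) ≤ ∏ k ∈ Finset.Icc (1 : ℤ) n, b k) (by linarith : (0:ℤ) ≤ b (n + 1) - 1)]
  have prodmono : ∀ n : ℤ, 0 ≤ n →
      (∏ k ∈ Finset.Icc (1 : ℤ) n, b k) ≤ ∏ k ∈ Finset.Icc (1 : ℤ) (n + 2), b k := by
    intro n hn
    calc (∏ k ∈ Finset.Icc (1 : ℤ) n, b k) ≤ ∏ k ∈ Finset.Icc (1 : ℤ) (n + 1), b k :=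
          prodmono1 n hn
      _ ≤ ∏ k ∈ Finset.Icc (1 : ℤ) (n + 1 + 1), b k := prodmono1 (n + 1) (by omega)
      _ = ∏ k ∈ Finset.Icc (1 : ℤ) (n + 2), b k := by rw [show n + 1 + 1 = n + 2 by ring]
  -- the main bound, two steps at a time
  have main : ∀ m : ℕ,
      q m ≤ (Nat.fib (m + 1) : ℤ) * ∏ k ∈ Finset.Icc (1 : ℤ) (m : ℤ), b k ∧
      q ((m : ℤ) + 1) ≤ (Nat.fib (m + 2) : ℤ) *
        ∏ k ∈ Finset.Icc (1 : ℤ) ((m : ℤ) + 1), b k := by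
    intro m
    induction m with
    | zero =>
      constructor
      · norm_num [hq0]
      · have hrec := hq 1 le_rfl
        norm_num at hrec
        rw [hqm1, hq0] at hrec
        simp only [Nat.cast_zero, zero_add]
        rw [Finset.Icc_self, Finset.prod_singleton]
        norm_num [hrec]
    | succ m ih =>
      obtain ⟨ih1, ih2⟩ := ih
      have hcast : ((m + 1 : ℕ) : ℤ) = (m : ℤ) + 1 := by push_cast; ring
      have hnat1 : m + 1 + 1 = m + 2 := by omega
      have hnat2 : m + 1 + 2 = m + 3 := by omega
      constructor
      · rw [hcast, hnat1]; exact ih2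
      · rw [hcast]
        have hm2 : (1 : ℤ) ≤ (m : ℤ) + 2 := by omega
        have hrec := hq ((m : ℤ) + 2) hm2
        have e1 : ((m : ℤ) + 2 - 1) = (m : ℤ) + 1 := by ring
        have e2 : ((m : ℤ) + 2 - 2) = (m : ℤ) := by ring
        rw [e1, e2] at hrec
        have ha' := ha ((m : ℤ) + 2) hm2
        have hb' := hb ((m : ℤ) + 2) hm2
        have hq1 : 0 ≤ q ((m : ℤ) + 1) := by
          have := qnonneg (m + 1); rwa [hcast] at this
        have hq0' : 0 ≤ q (m : ℤ) := qnonneg m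
        have step1 : q ((m : ℤ) + 1 + 1) ≤ b ((m : ℤ) + 2) * q ((m : ℤ) + 1) + q (m : ℤ) := by
          rw [show (m : ℤ) + 1 + 1 = (m : ℤ) + 2 by ring, hrec]
          rcases ha' with h | h <;> rw [h] <;> linarith
        have fib3 : (Nat.fib (m + 1 + 2) : ℤ)
            = (Nat.fib (m + 2) : ℤ) + (Nat.fib (m + 1) : ℤ) := by
          rw [show m + 1 + 2 = (m + 1) + 2 by ring, Nat.fib_add_two]
          push_cast; ring
        have psucc := prodsucc ((m : ℤ) + 1) (by omega)
        rw [show (m : ℤ) + 1 + 1 = (m : ℤ) + 2 by ring] at psucc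
        have pmono := prodmono (m : ℤ) (by omega)
        have ppos := prodpos ((m : ℤ) + 1)
        have fibpos : (0 : ℤ) ≤ (Nat.fib (m + 2) : ℤ) := by positivity
        have fibpos1 : (0 : ℤ) ≤ (Nat.fib (m + 1) : ℤ) := by positivity
        have hA : b ((m : ℤ) + 2) * q ((m : ℤ) + 1) ≤ b ((m : ℤ) + 2) *
            ((Nat.fib (m + 2) : ℤ) * ∏ k ∈ Finset.Icc (1 : ℤ) ((m : ℤ) + 1), b k) :=
          mul_le_mul_of_nonneg_left ih2 (by linarith)
        have hB : q (m : ℤ) ≤ (Nat.fib (m + 1) : ℤ) * ∏ k ∈ Finset.Icc (1 : ℤ) (m : ℤ), b k :=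
          ih1
        have eA : b ((m : ℤ) + 2) *
            ((Nat.fib (m + 2) : ℤ) * ∏ k ∈ Finset.Icc (1 : ℤ) ((m : ℤ) + 1), b k)
            = (Nat.fib (m + 2) : ℤ) * ∏ k ∈ Finset.Icc (1 : ℤ) ((m : ℤ) + 2), b k := by
          rw [psucc]; ring
        have hC : (Nat.fib (m + 1) : ℤ) * (∏ k ∈ Finset.Icc (1 : ℤ) (m : ℤ), b k)
            ≤ (Nat.fib (m + 1) : ℤ) * ∏ k ∈ Finset.Icc (1 : ℤ) ((m : ℤ) + 2), b k :=
          mul_le_mul_of_nonneg_left pmono fibpos1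
        have expand : ((Nat.fib (m + 2) : ℤ) + (Nat.fib (m + 1) : ℤ)) *
            (∏ k ∈ Finset.Icc (1 : ℤ) ((m : ℤ) + 2), b k)
            = (Nat.fib (m + 2) : ℤ) * (∏ k ∈ Finset.Icc (1 : ℤ) ((m : ℤ) + 2), b k)
              + (Nat.fib (m + 1) : ℤ) * (∏ k ∈ Finset.Icc (1 : ℤ) ((m : ℤ) + 2), b k) := by
          ring
        rw [show (m : ℤ) + 1 + 1 = (m : ℤ) + 2 by ring, fib3]
        calc q ((m : ℤ) + 2) ≤ b ((m : ℤ) + 2) * q ((m : ℤ) + 1) + q (m : ℤ) := by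
              have := step1; rwa [show (m : ℤ) + 1 + 1 = (m : ℤ) + 2 by ring] at this
          _ ≤ ((Nat.fib (m + 2) : ℤ) + (Nat.fib (m + 1) : ℤ)) *
              ∏ k ∈ Finset.Icc (1 : ℤ) ((m : ℤ) + 2), b k := by
            rw [expand]; linarith [hA, eA, hB, hC]
  -- conclude
  intro n hn
  lift n to ℕ using hn
  have htn : ((n : ℤ) + 1).toNat = n + 1 := by omega
  rw [htn]
  exact (main n).1
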